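/- If (a, f) and (b, g) are locally nilpotent modules over the Drinfeld quiver Q_z, with f^{∗n} = 0 and g^{∗m} = 0, then their fusion product is locally nilpotent; more precisely (f ⊗̂ g)^{∗(n+m)} = 0. -/

import Mathlib

/-!
Statement 3: If `(a, f)` and `(b, g)` are locally nilpotent modules over the Drinfeld quiver
`Q_z`, with `f^{∗n} = 0` and `g^{∗m} = 0`, then `(f ⊗̂ g)^{∗(n+m)} = 0`.
-/

open CategoryTheory MonoidalCategory

universe v u

variable {k : Type*} [Field k]
variable {A : Type u} [Category.{v} A] [MonoidalCategory A]
  [Preadditive A] [CategoryTheory.Linear k A] [MonoidalPreadditive A] [MonoidalLinear k A]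

/-- The fusion product `f ⊗̂ g` of two modules over the Drinfeld quiver `Q_z`. -/
noncomputable def fus (z : CategoryTheory.Center A) {a b : A}
    (f : z.1 ⊗ a ⟶ a) (g : z.1 ⊗ b ⟶ b) : z.1 ⊗ (a ⊗ b) ⟶ a ⊗ b :=
  (α_ z.1 a b).inv ≫ (f ▷ b)
    + (α_ z.1 a b).inv ≫ ((z.2.β a).hom ▷ b) ≫ (α_ a z.1 b).hom ≫ (a ◁ g)

/-- The `n`-th tensor power `z^{⊗n}` of an object `z` of the Drinfeld center of `A`. -/
noncomputable def zcpow (z : CategoryTheory.Center A) : ℕ → CategoryTheory.Center A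
  | 0 => 𝟙_ (CategoryTheory.Center A)
  | n + 1 => z ⊗ zcpow z n

/-- The iterated action `f^{∗n} : z^{⊗n} ⊗ a ⟶ a` of a module `(a, f)` over the Drinfeld
quiver `Q_z` (suppressing associators). -/
noncomputable def fstar (z : CategoryTheory.Center A) {a : A} (f : z.1 ⊗ a ⟶ a) :
    (n : ℕ) → ((zcpow z n).1 ⊗ a ⟶ a)
  | 0 => (λ_ a).hom
  | n + 1 => (α_ z.1 (zcpow z n).1 a).hom ≫ (z.1 ◁ fstar z f n) ≫ f

section Aux

set_option linter.unusedSectionVars false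

variable (z : CategoryTheory.Center A) {a b : A}

/-- The first summand of the fusion product. -/
noncomputable def fusF (f : z.1 ⊗ a ⟶ a) : z.1 ⊗ (a ⊗ b) ⟶ a ⊗ b :=
  (α_ z.1 a b).inv ≫ (f ▷ b)

/-- The second summand of the fusion product. -/
noncomputable def fusG (g : z.1 ⊗ b ⟶ b) : z.1 ⊗ (a ⊗ b) ⟶ a ⊗ b :=
  (α_ z.1 a b).inv ≫ ((z.2.β a).hom ▷ b) ≫ (α_ a z.1 b).hom ≫ (a ◁ g)

lemma fus_eq (f : z.1 ⊗ a ⟶ a) (g : z.1 ⊗ b ⟶ b) :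
    fus z f g = fusF z f + fusG z g := rfl

/-- The list of all "words" appearing in the expansion of `fstar z (fus z f g) N`. -/
noncomputable def WS (f : z.1 ⊗ a ⟶ a) (g : z.1 ⊗ b ⟶ b) :
    (N : ℕ) → List ((zcpow z N).1 ⊗ (a ⊗ b) ⟶ a ⊗ b)
  | 0 => [(λ_ (a ⊗ b)).hom]
  | N + 1 =>
    ((WS f g N).map fun t =>
        (α_ z.1 (zcpow z N).1 (a ⊗ b)).hom ≫ (z.1 ◁ t) ≫ fusF z f)
      ++ ((WS f g N).map fun t =>
        (α_ z.1 (zcpow z N).1 (a ⊗ b)).hom ≫ (z.1 ◁ t) ≫ fusG z g)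

lemma sum_map_conj {x y c d : A} (w : A) (p : c ⟶ w ⊗ x) (q : w ⊗ y ⟶ d)
    (L : List (x ⟶ y)) :
    (L.map fun t => p ≫ (w ◁ t) ≫ q).sum = p ≫ (w ◁ L.sum) ≫ q := by
  induction L with
  | nil => simp
  | cons h tl ih =>
    simp [ih, MonoidalPreadditive.whiskerLeft_add, Preadditive.comp_add,
      Preadditive.add_comp]

lemma WS_sum (f : z.1 ⊗ a ⟶ a) (g : z.1 ⊗ b ⟶ b) (N : ℕ) :
    (WS z f g N).sum = fstar z (fus z f g) N := by
  induction N with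
  | zero => simp [WS, fstar]; exact List.sum_singleton
  | succ N ih =>
    rw [WS]; erw [List.sum_append, sum_map_conj, sum_map_conj]; rw [ih]
    show _ = _ ≫ _ ≫ fus z f g
    rw [fus_eq]
    simp [Preadditive.comp_add]
    exact (Preadditive.comp_add _ _ _ _ _ _).symm

lemma keyF {x y : A} (f : z.1 ⊗ a ⟶ a) (u : x ⟶ a) (v : y ⟶ b) :
    (z.1 ◁ (u ⊗ₘ v)) ≫ fusF z f
      = (α_ z.1 x y).inv ≫ (((z.1 ◁ u) ≫ f) ⊗ₘ v) := by
  rw [fusF, ← MonoidalCategory.id_tensorHom z.1 (u ⊗ₘ v),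
    associator_inv_naturality_assoc, ← MonoidalCategory.tensorHom_id f b,
    tensorHom_comp_tensorHom]
  simp

lemma keyG {x y : A} (g : z.1 ⊗ b ⟶ b) (u : x ⟶ a) (v : y ⟶ b) :
    (z.1 ◁ (u ⊗ₘ v)) ≫ fusG z g
      = (α_ z.1 x y).inv ≫ ((z.2.β x).hom ▷ y) ≫ (α_ x z.1 y).hom
          ≫ (u ⊗ₘ ((z.1 ◁ v) ≫ g)) := by
  rw [fusG, ← MonoidalCategory.id_tensorHom z.1 (u ⊗ₘ v),
    associator_inv_naturality_assoc, ← MonoidalCategory.tensorHom_id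
    (z.2.β a).hom b, tensorHom_comp_tensorHom_assoc, Category.comp_id,
    MonoidalCategory.id_tensorHom, HalfBraiding.naturality]
  conv_lhs => rw [← Category.id_comp v]
  rw [← tensorHom_comp_tensorHom, ← MonoidalCategory.tensorHom_id u z.1]
  simp only [Category.assoc]
  rw [associator_naturality_assoc, ← MonoidalCategory.id_tensorHom a g,
    tensorHom_comp_tensorHom]
  simp

lemma WS_mem (f : z.1 ⊗ a ⟶ a) (g : z.1 ⊗ b ⟶ b) :
    ∀ N, ∀ t ∈ WS z f g N, ∃ i j, i + j = N ∧
      ∃ φ : (zcpow z N).1 ⊗ (a ⊗ b) ⟶ ((zcpow z i).1 ⊗ a) ⊗ ((zcpow z j).1 ⊗ b),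
        t = φ ≫ (fstar z f i ⊗ₘ fstar z g j) := by
  intro N
  induction N with
  | zero =>
    intro t ht
    simp only [WS] at ht
    erw [List.mem_singleton] at ht
    subst ht
    refine ⟨0, 0, rfl, (λ_ (a ⊗ b)).hom ≫
      (MonoidalCategory.tensorHom (λ_ a).inv (λ_ b).inv), ?_⟩
    simp only [fstar, Category.assoc, tensorHom_comp_tensorHom]
    erw [Category.assoc, tensorHom_comp_tensorHom, Iso.inv_hom_id, Iso.inv_hom_id, id_tensorHom_id, Category.comp_id]
  | succ N ih =>
    intro t ht
    rw [WS] at ht; erw [List.mem_append, List.mem_map, List.mem_map] at ht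
    rcases ht with ⟨t', ht', rfl⟩ | ⟨t', ht', rfl⟩
    · obtain ⟨i, j, hij, φ, rfl⟩ := ih t' ht'
      refine ⟨i + 1, j, by omega,
        (α_ z.1 (zcpow z N).1 (a ⊗ b)).hom ≫ (z.1 ◁ φ)
          ≫ (α_ z.1 ((zcpow z i).1 ⊗ a) ((zcpow z j).1 ⊗ b)).inv
          ≫ (MonoidalCategory.tensorHom (α_ z.1 (zcpow z i).1 a).inv
              (𝟙 ((zcpow z j).1 ⊗ b))), ?_⟩
      simp only [fstar, MonoidalCategory.whiskerLeft_comp, Category.assoc, keyF]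
      erw [Category.assoc, Category.assoc, Category.assoc, tensorHom_comp_tensorHom]
      simp
      erw [Iso.inv_hom_id_assoc]
      rfl
    · obtain ⟨i, j, hij, φ, rfl⟩ := ih t' ht'
      refine ⟨i, j + 1, by omega,
        (α_ z.1 (zcpow z N).1 (a ⊗ b)).hom ≫ (z.1 ◁ φ)
          ≫ (α_ z.1 ((zcpow z i).1 ⊗ a) ((zcpow z j).1 ⊗ b)).inv
          ≫ ((z.2.β ((zcpow z i).1 ⊗ a)).hom ▷ ((zcpow z j).1 ⊗ b))
          ≫ (α_ ((zcpow z i).1 ⊗ a) z.1 ((zcpow z j).1 ⊗ b)).hom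
          ≫ (MonoidalCategory.tensorHom (𝟙 ((zcpow z i).1 ⊗ a))
              (α_ z.1 (zcpow z j).1 b).inv), ?_⟩
      simp only [fstar, MonoidalCategory.whiskerLeft_comp, Category.assoc, keyG]
      erw [Category.assoc, Category.assoc, Category.assoc, Category.assoc, Category.assoc, tensorHom_comp_tensorHom]
      erw [Category.id_comp, Iso.inv_hom_id_assoc]
      rfl

lemma fstar_add_zero {c : A} (h : z.1 ⊗ c ⟶ c) (n k : ℕ)
    (hn : fstar z h n = 0) : fstar z h (n + k) = 0 := by
  induction k with
  | zero => exact hn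
  | succ k ih =>
    show (α_ z.1 (zcpow z (n + k)).1 c).hom ≫ (z.1 ◁ fstar z h (n + k)) ≫ h = 0
    rw [ih]
    simp

end Aux

/-- The fusion product of locally nilpotent modules is locally nilpotent:
if `f^{∗n} = 0` and `g^{∗m} = 0` then `(f ⊗̂ g)^{∗(n+m)} = 0`. -/
theorem fus_locally_nilpotent (z : CategoryTheory.Center A) {a b : A}
    (f : z.1 ⊗ a ⟶ a) (g : z.1 ⊗ b ⟶ b) (n m : ℕ)
    (hf : fstar z f n = 0) (hg : fstar z g m = 0) :
    fstar z (fus z f g) (n + m) = 0 := by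
  rw [← WS_sum]
  apply List.sum_eq_zero
  intro t ht
  obtain ⟨i, j, hij, φ, rfl⟩ := WS_mem z f g (n + m) t ht
  rcases le_or_gt n i with h | h
  · obtain ⟨c, rfl⟩ := Nat.exists_eq_add_of_le h
    rw [fstar_add_zero z f n c hf, MonoidalPreadditive.zero_tensor, Limits.comp_zero]
  · have hm : m ≤ j := by omega
    obtain ⟨c, rfl⟩ := Nat.exists_eq_add_of_le hm
    rw [fstar_add_zero z g m c hg, MonoidalPreadditive.tensor_zero, Limits.comp_zero]
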